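/- arXiv:1810.11552 — 3 statements merged into one kernel-verified Lean document; each statement's English description precedes it below -/
import Mathlib

section
/- Let M be a matroid on a finite ground set E and let w : E → ℝ. Then there exists a matroid M_w on the same ground set E whose bases are exactly the w-maximal bases of M, i.e., the bases B of M satisfying ∑_{e∈B} w(e) = max_{B' a base of M} ∑_{e∈B'} w(e). In particular, the collection of w-maximal bases of M satisfies the base-exchange property, and M_w has the same rank as M. -/
open Set

private lemma finsum_exchange {α : Type*} (w : α → ℝ) {B : Set α} {e f : α}
    (hB : B.Finite) (he : e ∈ B) (hf : f ∉ B) :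
    ∑ᶠ x ∈ insert f (B \ {e}), w x = ∑ᶠ x ∈ B, w x - w e + w f := by
  classical
  have h1 : (insert f (B \ {e})) = ((insert f ((hB.toFinset).erase e) : Finset α) : Set α) := by
    ext x
    simp [Set.mem_insert_iff, Set.mem_diff, and_comm]
  have h2 : B = ((hB.toFinset : Finset α) : Set α) := by simp
  rw [h1, finsum_mem_coe_finset]
  conv_rhs => rw [h2, finsum_mem_coe_finset]
  rw [Finset.sum_insert (by simp [hf])]
  rw [Finset.sum_erase_eq_sub (by simp [he])]
  ring

/-- Let `M` be a matroid on a finite ground set and `w` a real weight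
function. Then there is a matroid `Mw` on the same ground set whose bases are exactly the
`w`-maximal bases of `M` (in particular the `w`-maximal bases satisfy the base-exchange
property, since they are the bases of a matroid), and `Mw` has the same rank as `M`
(any base of `Mw` has the same cardinality as any base of `M`). -/
theorem matroid_of_w_maximal_bases {α : Type*} (M : Matroid α) (hM : M.Finite)
    (w : α → ℝ) :
    ∃ Mw : Matroid α,
      Mw.E = M.E ∧
      (∀ B : Set α, Mw.IsBase B ↔
        (M.IsBase B ∧ ∀ B' : Set α, M.IsBase B' → ∑ᶠ e ∈ B', w e ≤ ∑ᶠ e ∈ B, w e)) ∧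
      (∀ B B' : Set α, Mw.IsBase B → M.IsBase B' → B.encard = B'.encard) := by
  classical
  have hE : M.E.Finite := hM.ground_finite
  set P : Set α → Prop :=
    fun B => M.IsBase B ∧ ∀ B' : Set α, M.IsBase B' → ∑ᶠ e ∈ B', w e ≤ ∑ᶠ e ∈ B, w e with hP
  have hfinB : ∀ ⦃B⦄, M.IsBase B → B.Finite := fun B hB => hE.subset hB.subset_ground
  -- existence of a `w`-maximal base
  have hex : ∃ B, P B := by
    have hsetfin : {B | M.IsBase B}.Finite :=
      hE.finite_subsets.subset (fun B hB => Matroid.IsBase.subset_ground hB)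
    obtain ⟨B₀, hB₀⟩ := M.exists_isBase
    obtain ⟨B, hB, hmax⟩ := Set.Finite.exists_maximalFor (fun B => ∑ᶠ e ∈ B, w e)
      {B | M.IsBase B} hsetfin ⟨B₀, hB₀⟩
    refine ⟨B, hB, fun B' hB' => ?_⟩
    rcases le_or_gt (∑ᶠ e ∈ B', w e) (∑ᶠ e ∈ B, w e) with h | h
    · exact h
    · exact hmax hB' h.le
  -- the exchange property
  have hexch : Matroid.ExchangeProperty P := by
    rintro B₁ B₂ ⟨hB₁, hmax₁⟩ ⟨hB₂, hmax₂⟩ e ⟨heB₁, heB₂⟩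
    set X := M.closure (B₁ \ {e}) with hX
    have heX : e ∉ X := hB₁.indep.notMem_closure_diff_of_mem heB₁
    have heE : e ∈ M.E := hB₁.subset_ground heB₁
    have hI2X : M.Indep (B₂ ∩ X) := hB₂.indep.subset inter_subset_left
    have hclXX : M.closure (B₂ ∩ X) ⊆ X := by
      have := M.closure_subset_closure (show B₂ ∩ X ⊆ X from inter_subset_right)
      simpa [hX, M.closure_closure] using this
    have hIe : M.Indep (insert e (B₂ ∩ X)) := by
      rw [hI2X.insert_indep_iff_of_notMem (fun h => heX h.2)]
      exact ⟨heE, fun h => heX (hclXX h)⟩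
    obtain ⟨B₃, hB₃, hsub, hsub'⟩ := hIe.exists_isBase_subset_union_isBase hB₂
    have heB₃ : e ∈ B₃ := hsub (mem_insert _ _)
    have hB₃sub : B₃ ⊆ insert e B₂ := by
      intro x hx
      rcases hsub' hx with hx' | hx'
      · rcases hx' with h | h
        · exact h ▸ mem_insert _ _
        · exact mem_insert_of_mem _ h.1
      · exact mem_insert_of_mem _ hx'
    have hcard : B₃.encard = B₂.encard := hB₃.encard_eq_encard_of_isBase hB₂
    -- find the element g of B₂ missing from B₃
    have hg : ∃ g ∈ B₂, g ∉ B₃ := by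
      by_contra h
      push_neg at h
      have : B₂ ⊆ B₃ := h
      have : B₃ = insert e B₂ := subset_antisymm hB₃sub (insert_subset heB₃ this)
      rw [this, encard_insert_of_notMem heB₂] at hcard
      have hB₂fin : B₂.Finite := hfinB hB₂
      rw [Set.Finite.encard_eq_coe_toFinset_card hB₂fin] at hcard
      have hcard' : hB₂fin.toFinset.card + 1 = hB₂fin.toFinset.card := by exact_mod_cast hcard
      omega
    obtain ⟨g, hgB₂, hgB₃⟩ := hg
    have hgX : g ∉ X := fun h => hgB₃ (hsub (mem_insert_of_mem _ ⟨hgB₂, h⟩))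
    have hge : g ≠ e := fun h => heB₂ (h ▸ hgB₂)
    have hgB₁ : g ∉ B₁ := by
      intro h
      exact hgX (M.subset_closure (B₁ \ {e})
        ((diff_subset).trans hB₁.subset_ground) ⟨h, hge⟩)
    have hB₃eq : B₃ = insert e (B₂ \ {g}) := by
      refine (((hfinB hB₂).diff (t := {g})).insert e).eq_of_subset_of_encard_le' ?_ ?_
      · intro x hx
        rcases hB₃sub hx with h | h
        · exact h ▸ mem_insert _ _
        · exact mem_insert_of_mem _ ⟨h, fun hxg => hgB₃ (hxg ▸ hx)⟩
      · rw [hcard, encard_exchange heB₂ hgB₂]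
    -- weight comparison: w e ≤ w g
    have hwe : w e ≤ w g := by
      have h3 := hmax₂ B₃ hB₃
      rw [hB₃eq, finsum_exchange w (hfinB hB₂) hgB₂ heB₂] at h3
      linarith
    -- the exchanged set is a base of M
    have hB₄indep : M.Indep (insert g (B₁ \ {e})) := by
      rw [(hB₁.indep.diff {e}).insert_indep_iff_of_notMem (fun h => hgB₁ h.1)]
      exact ⟨hB₂.subset_ground hgB₂, hgX⟩
    have hB₄ : M.IsBase (insert g (B₁ \ {e})) :=
      hB₁.exchange_isBase_of_indep hgB₁ hB₄indep
    have hwg : w g ≤ w e := by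
      have h4 := hmax₁ _ hB₄
      rw [finsum_exchange w (hfinB hB₁) heB₁ hgB₁] at h4
      linarith
    have hweq : w g = w e := le_antisymm hwg hwe
    refine ⟨g, ⟨hgB₂, hgB₁⟩, hB₄, fun B' hB' => ?_⟩
    rw [finsum_exchange w (hfinB hB₁) heB₁ hgB₁, hweq]
    have := hmax₁ B' hB'
    linarith
  refine ⟨Matroid.ofIsBaseOfFinite hE P hex hexch (fun B hB => hB.1.subset_ground), rfl, ?_, ?_⟩
  · intro B
    rw [Matroid.ofIsBaseOfFinite_isBase]
  · intro B B' hB hB'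
    rw [Matroid.ofIsBaseOfFinite_isBase] at hB
    exact hB.1.encard_eq_encard_of_isBase hB'
end

section
/- Let k be a field, n a positive integer, w ∈ ℤⁿ, ξ ∈ kˣ a unit, and I an ideal of the Laurent polynomial ring k[x₁^{±1},…,x_n^{±1}]. Then the initial ideal in_w I is invariant under σ_{ξ,w}: for every g ∈ in_w I one has σ_{ξ,w}(g) ∈ in_w I, and hence σ_{ξ,w}(in_w I) = in_w I. -/
noncomputable section
open scoped Classical

/-- The Laurent polynomial ring `k[x₁^{±1},…,x_n^{±1}]`, realized as the additive monoid
algebra on `ℤⁿ`. -/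
abbrev Laur (k : Type*) [CommRing k] (n : ℕ) : Type _ := AddMonoidAlgebra k (Fin n → ℤ)

variable {k : Type*} {n : ℕ}

/-- The standard pairing `⟨u,w⟩ = ∑ i, uᵢ wᵢ`. -/
def pairZ (u w : Fin n → ℤ) : ℤ := ∑ i, u i * w i

/-- `trop(f)(w) = min {⟨u,w⟩ : u ∈ supp f}` (junk value for `f = 0`). -/
def tropZ [CommRing k] (w : Fin n → ℤ) (f : Laur k n) : ℤ :=
  sInf ((fun u => pairZ u w) '' (f.coeff.support : Set (Fin n → ℤ)))

/-- `init_w f`: the sum of the terms of `f` whose exponent `u` satisfies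
`⟨u,w⟩ = trop(f)(w)`; `init_w 0 = 0`. -/
def initZ [CommRing k] (w : Fin n → ℤ) (f : Laur k n) : Laur k n :=
  AddMonoidAlgebra.ofCoeff (Finsupp.filter (fun u => pairZ u w = tropZ w f) f.coeff)

/-- The initial ideal `in_w I`, generated by the initial forms of elements of `I`. -/
def initIdealZ [CommRing k] (w : Fin n → ℤ) (I : Ideal (Laur k n)) : Ideal (Laur k n) :=
  Ideal.span {g | ∃ f ∈ I, g = initZ w f}

/-- `σ_{ξ,w}`: the `k`-algebra automorphism of the Laurent polynomial ring determined by
`x^u ↦ ξ^{⟨u,w⟩} x^u`. -/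
def sigmaTw [Field k] (ξ : kˣ) (w : Fin n → ℤ) (f : Laur k n) : Laur k n :=
  ∑ u ∈ f.coeff.support, AddMonoidAlgebra.single u (((ξ ^ pairZ u w : kˣ) : k) * f.coeff u)


lemma pairZ_add (u v w : Fin n → ℤ) : pairZ (u + v) w = pairZ u w + pairZ v w := by
  simp [pairZ, add_mul, Finset.sum_add_distrib]

lemma pairZ_zero (w : Fin n → ℤ) : pairZ (0 : Fin n → ℤ) w = 0 := by simp [pairZ]

/-- The monoid hom `u ↦ ξ^{⟨u,w⟩} x^u`. -/
def sigmaMon [Field k] (ξ : kˣ) (w : Fin n → ℤ) :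
    Multiplicative (Fin n → ℤ) →* Laur k n where
  toFun u := AddMonoidAlgebra.single (Multiplicative.toAdd u)
      ((ξ ^ pairZ (Multiplicative.toAdd u) w : kˣ) : k)
  map_one' := by
    simp [pairZ_zero]
    rfl
  map_mul' x y := by
    rw [AddMonoidAlgebra.single_mul_single]
    simp [pairZ_add, zpow_add, Units.val_mul]

/-- `σ_{ξ,w}` as a `k`-algebra hom. -/
def sigmaHom [Field k] (ξ : kˣ) (w : Fin n → ℤ) : Laur k n →ₐ[k] Laur k n :=
  (AddMonoidAlgebra.lift k (Laur k n) (Fin n → ℤ)) (sigmaMon ξ w)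

lemma sigmaTw_eq [Field k] (ξ : kˣ) (w : Fin n → ℤ) (f : Laur k n) :
    sigmaTw ξ w f = sigmaHom ξ w f := by
  rw [sigmaHom, AddMonoidAlgebra.lift_apply]
  unfold sigmaTw
  rw [Finsupp.sum]
  refine Finset.sum_congr rfl fun u hu => ?_
  simp [sigmaMon, AddMonoidAlgebra.smul_single, mul_comm]

lemma sigmaTw_coeff [Field k] (ξ : kˣ) (w : Fin n → ℤ) (f : Laur k n) (u : Fin n → ℤ) :
    (sigmaTw ξ w f).coeff u = ((ξ ^ pairZ u w : kˣ) : k) * f.coeff u := by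
  unfold sigmaTw
  rw [AddMonoidAlgebra.coeff_sum, Finset.sum_apply']
  by_cases hu : u ∈ f.coeff.support
  · rw [Finset.sum_eq_single u]
    · simp
    · intro v hv hvu
      simp [AddMonoidAlgebra.coeff_single, Finsupp.single_apply, hvu]
    · intro h; exact absurd hu h
  · have hf : f.coeff u = 0 := Finsupp.notMem_support_iff.mp hu
    rw [hf, mul_zero]
    refine Finset.sum_eq_zero fun v hv => ?_
    have : v ≠ u := fun h => hu (h ▸ hv)
    simp [AddMonoidAlgebra.coeff_single, Finsupp.single_apply, this]

lemma sigmaTw_sigmaTw_inv [Field k] (ξ : kˣ) (w : Fin n → ℤ) (g : Laur k n) :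
    sigmaTw ξ w (sigmaTw ξ⁻¹ w g) = g := by
  ext u
  rw [sigmaTw_coeff, sigmaTw_coeff, ← mul_assoc, ← Units.val_mul, ← mul_zpow,
    mul_inv_cancel, one_zpow, Units.val_one, one_mul]

lemma sigma_init [Field k] (ξ : kˣ) (w : Fin n → ℤ) (f : Laur k n) :
    sigmaTw ξ w (initZ w f) = ((ξ ^ tropZ w f : kˣ) : k) • initZ w f := by
  unfold sigmaTw
  have hsupp : ∀ u ∈ (initZ w f).coeff.support, pairZ u w = tropZ w f := by
    intro u hu
    have := Finsupp.mem_support_iff.mp hu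
    rw [initZ, AddMonoidAlgebra.coeff_ofCoeff, Finsupp.filter_apply] at this
    by_contra h
    simp [h] at this
  calc ∑ u ∈ (initZ w f).coeff.support,
        AddMonoidAlgebra.single u (((ξ ^ pairZ u w : kˣ) : k) * (initZ w f).coeff u)
      = ∑ u ∈ (initZ w f).coeff.support,
        ((ξ ^ tropZ w f : kˣ) : k) • AddMonoidAlgebra.single u ((initZ w f).coeff u) := by
        refine Finset.sum_congr rfl fun u hu => ?_
        rw [hsupp u hu, AddMonoidAlgebra.smul_single]
        rfl
    _ = ((ξ ^ tropZ w f : kˣ) : k) • ∑ u ∈ (initZ w f).coeff.support,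
        AddMonoidAlgebra.single u ((initZ w f).coeff u) := by rw [Finset.smul_sum]
    _ = ((ξ ^ tropZ w f : kˣ) : k) • initZ w f := by
        rw [← Finsupp.sum, AddMonoidAlgebra.sum_coeff_single]

lemma sigma_mem [Field k] (ξ : kˣ) (w : Fin n → ℤ) (I : Ideal (Laur k n)) :
    ∀ g ∈ initIdealZ w I, sigmaTw ξ w g ∈ initIdealZ w I := by
  intro g hg
  refine Submodule.span_induction ?_ ?_ ?_ ?_ hg
  · rintro x ⟨f, hf, rfl⟩
    rw [sigma_init]
    exact Submodule.smul_of_tower_mem _ _ (Ideal.subset_span ⟨f, hf, rfl⟩)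
  · simp [sigmaTw]
  · intro x y _ _ hx hy
    rw [sigmaTw_eq] at *
    rw [map_add]
    exact Ideal.add_mem _ hx hy
  · intro r x _ hx
    rw [smul_eq_mul, sigmaTw_eq] at *
    rw [map_mul]
    exact Ideal.mul_mem_left _ _ hx

/-- For any ideal `I` of the Laurent polynomial ring, the initial ideal
`in_w I` is invariant under `σ_{ξ,w}`: every `g ∈ in_w I` has `σ_{ξ,w}(g) ∈ in_w I`, and
hence `σ_{ξ,w}(in_w I) = in_w I`. -/
theorem sigma_preserves_initial_ideal [Field k] (hn : 0 < n) (w : Fin n → ℤ) (ξ : kˣ)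
    (I : Ideal (Laur k n)) :
    (∀ g ∈ initIdealZ w I, sigmaTw ξ w g ∈ initIdealZ w I) ∧
    sigmaTw ξ w '' (initIdealZ w I : Set (Laur k n)) = (initIdealZ w I : Set (Laur k n)) := by
  refine ⟨sigma_mem ξ w I, Set.Subset.antisymm ?_ ?_⟩
  · rintro _ ⟨g, hg, rfl⟩
    exact sigma_mem ξ w I g hg
  · intro g hg
    exact ⟨sigmaTw ξ⁻¹ w g, sigma_mem ξ⁻¹ w I g hg, sigmaTw_sigmaTw_inv ξ w g⟩

end
end

section
/- Let k be an algebraically closed field, let 1 ≤ d < n, let V ⊆ kⁿ be a d-dimensional linear subspace not contained in any coordinate hyperplane, let M be the associated rank-d loop-free matroid on {1,…,n}, and let w = (w₁,…,w_n) ∈ ℝⁿ. Then there exist f₁,…,f_{n−d} ∈ k[x₁,…,x_n] that generate the vanishing ideal I(V) ⊆ k[x₁,…,x_n], such that the initial forms init_w f₁,…,init_w f_{n−d} generate the initial ideal in_w(I(V)·k[x₁^{±1},…,x_n^{±1}]) in the Laurent polynomial ring, and such that w₁ + ⋯ + w_n − (trop(f₁)(w) + ⋯ + trop(f_{n−d})(w))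 = wt_M(w), where wt_M(w) = max_{B a base of M} ∑_{i∈B} w_i. -/
noncomputable section
open scoped Classical

variable {k : Type*} [Field k] {n : ℕ}

/-- The monomial `x^u` of the Laurent polynomial ring. -/
def xu (u : Fin n → ℤ) : Laur k n := AddMonoidAlgebra.single u 1

/-- The pairing `⟨u,w⟩ = ∑ i, uᵢ wᵢ` of an integral exponent with a real weight. -/
def pairR (u : Fin n → ℤ) (w : Fin n → ℝ) : ℝ := ∑ i, (u i : ℝ) * w i

/-- `trop(f)(w) = min {⟨u,w⟩ : u ∈ supp f}` (junk value for `f = 0`). -/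
def tropR (w : Fin n → ℝ) (f : Laur k n) : ℝ :=
  sInf ((fun u => pairR u w) '' (f.coeff.support : Set (Fin n → ℤ)))

/-- `init_w f`: the sum of the terms of `f` whose exponent `u` satisfies
`⟨u,w⟩ = trop(f)(w)`; `init_w 0 = 0`. -/
def initR (w : Fin n → ℝ) (f : Laur k n) : Laur k n :=
  AddMonoidAlgebra.ofCoeff (Finsupp.filter (fun u => pairR u w = tropR w f) f.coeff)

/-- The initial ideal `in_w I`, generated by the initial forms of elements of `I`. -/
def initIdealR (w : Fin n → ℝ) (I : Ideal (Laur k n)) : Ideal (Laur k n) :=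
  Ideal.span {g | ∃ f ∈ I, g = initR w f}

/-- The natural inclusion of the polynomial ring into the Laurent polynomial ring,
sending `xᵢ` to `x^{eᵢ}`. -/
def toLaurent : MvPolynomial (Fin n) k →ₐ[k] Laur k n :=
  MvPolynomial.aeval (fun i => xu (Pi.single i 1))

/-- The vanishing ideal `I(V) ⊆ k[x₁,…,x_n]` of a linear subspace `V ⊆ kⁿ`. -/
def vanishingIdeal (V : Submodule k (Fin n → k)) : Ideal (MvPolynomial (Fin n) k) where
  carrier := {p | ∀ v ∈ V, MvPolynomial.eval v p = 0}
  add_mem' := by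
    intro a b ha hb v hv
    simp [Set.mem_setOf_eq] at *
    simp [ha v hv, hb v hv]
  zero_mem' := by intro v hv; simp
  smul_mem' := by
    intro c p hp v hv
    simp only [Set.mem_setOf_eq, smul_eq_mul, map_mul] at *
    simp [hp v hv]

/-- The coordinate functional `xᵢ` restricted to the subspace `V`. -/
def coordOn (V : Submodule k (Fin n → k)) (i : Fin n) : V →ₗ[k] k :=
  (LinearMap.proj i : (Fin n → k) →ₗ[k] k).domRestrict V

/-- `M` is the matroid on `{1,…,n}` associated to the subspace `V ⊆ kⁿ`: its ground set is
everything and a set `S` is independent iff the coordinate functionals `xᵢ|_V`, `i ∈ S`,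
are linearly independent. -/
def IsSubspaceMatroid (V : Submodule k (Fin n → k)) (M : Matroid (Fin n)) : Prop :=
  M.E = Set.univ ∧
    ∀ S : Set (Fin n), M.Indep S ↔ LinearIndependent k (fun i : S => coordOn V (i : Fin n))

/-- A circuit of a matroid is a minimal dependent set. -/
def Matroid.IsCircuit' {α : Type*} (M : Matroid α) (C : Set α) : Prop :=
  Minimal M.Dep C

-- ### pairR lemmas
lemma pairR_add (u v : Fin n → ℤ) (w : Fin n → ℝ) :
    pairR (u + v) w = pairR u w + pairR v w := by
  simp [pairR, add_mul, Finset.sum_add_distrib]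

lemma pairR_neg (u : Fin n → ℤ) (w : Fin n → ℝ) : pairR (-u) w = - pairR u w := by
  simp [pairR, Finset.sum_neg_distrib]

lemma pairR_single (i : Fin n) (w : Fin n → ℝ) : pairR (Pi.single i 1) w = w i := by
  simp [pairR, Pi.single_apply]

-- ### level-part
def levPart (w : Fin n → ℝ) (c : ℝ) (f : Laur k n) : Laur k n :=
  AddMonoidAlgebra.ofCoeff (Finsupp.filter (fun u => pairR u w = c) f.coeff)

lemma initR_eq_levPart (w : Fin n → ℝ) (f : Laur k n) :
    initR w f = levPart w (tropR w f) f := rfl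

lemma levPart_apply (w : Fin n → ℝ) (c : ℝ) (f : Laur k n) (u : Fin n → ℤ) :
    (levPart w c f).coeff u = if pairR u w = c then f.coeff u else 0 :=
  Finsupp.filter_apply _ f.coeff u

lemma levPart_add (w : Fin n → ℝ) (c : ℝ) (f g : Laur k n) :
    levPart w c (f + g) = levPart w c f + levPart w c g := by
  simp only [levPart, AddMonoidAlgebra.coeff_add, Finsupp.filter_add, AddMonoidAlgebra.ofCoeff_add]

lemma levPart_zero (w : Fin n → ℝ) (c : ℝ) : levPart w c (0 : Laur k n) = 0 :=
  congrArg AddMonoidAlgebra.ofCoeff (Finsupp.filter_zero _)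

lemma levPart_sum {α : Type*} (w : Fin n → ℝ) (c : ℝ) (s : Finset α) (f : α → Laur k n) :
    levPart w c (∑ a ∈ s, f a) = ∑ a ∈ s, levPart w c (f a) := by
  induction s using Finset.induction with
  | empty => simp [levPart_zero]
  | insert _ _ h ih => simp [Finset.sum_insert h, levPart_add, ih]

lemma levPart_eq_zero (w : Fin n → ℝ) (c : ℝ) {f : Laur k n}
    (h : ∀ u ∈ f.coeff.support, pairR u w ≠ c) : levPart w c f = 0 := by
  ext u
  rw [levPart_apply]
  split_ifs with hc
  · by_cases hu : u ∈ f.coeff.support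
    · exact absurd hc (h u hu)
    · simpa using Finsupp.notMem_support_iff.mp hu
  · rfl

lemma support_levPart (w : Fin n → ℝ) (c : ℝ) (f : Laur k n) :
    (levPart w c f).coeff.support = f.coeff.support.filter (fun u => pairR u w = c) :=
  Finsupp.support_filter _ _

-- ### trop lemmas
lemma tropR_le (w : Fin n → ℝ) {f : Laur k n} {u : Fin n → ℤ} (hu : u ∈ f.coeff.support) :
    tropR w f ≤ pairR u w := by
  apply csInf_le
  · exact ((f.coeff.support.finite_toSet).image (fun u => pairR u w)).bddBelow
  · exact ⟨u, hu, rfl⟩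

lemma exists_tropR (w : Fin n → ℝ) {f : Laur k n} (hf : f ≠ 0) :
    ∃ u ∈ f.coeff.support, pairR u w = tropR w f := by
  have hne : ((fun u => pairR u w) '' (f.coeff.support : Set (Fin n → ℤ))).Nonempty := by
    obtain ⟨u, hu⟩ := Finsupp.support_nonempty_iff.mpr (fun h => hf (AddMonoidAlgebra.coeff_injective h))
    exact ⟨_, ⟨u, hu, rfl⟩⟩
  have := hne.csInf_mem ((f.coeff.support.finite_toSet).image _)
  obtain ⟨u, hu, h⟩ := this
  exact ⟨u, hu, h⟩

lemma le_tropR (w : Fin n → ℝ) {f : Laur k n} (hf : f ≠ 0) {c : ℝ}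
    (h : ∀ u ∈ f.coeff.support, c ≤ pairR u w) : c ≤ tropR w f := by
  obtain ⟨u, hu, he⟩ := exists_tropR w hf
  exact he ▸ h u hu

lemma initR_ne_zero (w : Fin n → ℝ) {f : Laur k n} (hf : f ≠ 0) : initR w f ≠ 0 := by
  obtain ⟨u, hu, he⟩ := exists_tropR w hf
  intro h0
  have := congrFun (congrArg (fun g : Laur k n => (g.coeff : (Fin n → ℤ) → k)) h0) u
  rw [initR_eq_levPart] at this
  simp only [levPart_apply, he, if_pos rfl] at this
  exact Finsupp.mem_support_iff.mp hu (by simpa using this)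

lemma initR_zero (w : Fin n → ℝ) : initR w (0 : Laur k n) = 0 :=
  congrArg AddMonoidAlgebra.ofCoeff (Finsupp.filter_zero _)

lemma support_initR_subset (w : Fin n → ℝ) (f : Laur k n) :
    (initR w f).coeff.support ⊆ f.coeff.support := by
  rw [initR_eq_levPart, support_levPart]; exact Finset.filter_subset _ _

lemma pairR_of_mem_initR (w : Fin n → ℝ) (f : Laur k n) {u : Fin n → ℤ}
    (hu : u ∈ (initR w f).coeff.support) : pairR u w = tropR w f := by
  rw [initR_eq_levPart, support_levPart] at hu
  exact (Finset.mem_filter.mp hu).2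

lemma levPart_single (w : Fin n → ℝ) (c : ℝ) (u : Fin n → ℤ) (b : k) :
    levPart w c (AddMonoidAlgebra.single u b)
      = if pairR u w = c then AddMonoidAlgebra.single u b else 0 := by
  ext v
  rw [levPart_apply]
  by_cases hv : v = u
  · subst hv
    split_ifs <;> simp_all [Finsupp.single_apply]
  · have : (AddMonoidAlgebra.single u b : Laur k n).coeff v = 0 := Finsupp.single_eq_of_ne' (Ne.symm hv)
    split_ifs <;> simp_all

-- ### multiplication lemmas
lemma levPart_single_mul (w : Fin n → ℝ) (c : ℝ) (u : Fin n → ℤ) (a : k) (g : Laur k n) :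
    levPart w c (AddMonoidAlgebra.single u a * g)
      = AddMonoidAlgebra.single u a * levPart w (c - pairR u w) g := by
  ext v
  rw [levPart_apply, AddMonoidAlgebra.coeff_single_mul_apply, AddMonoidAlgebra.coeff_single_mul_apply,
    levPart_apply]
  have hiff : pairR v w = c ↔ pairR (-u + v) w = c - pairR u w := by
    rw [pairR_add, pairR_neg]; constructor <;> intro h <;> linarith
  split_ifs with h1 h2 h2
  · rfl
  · exact absurd (hiff.mp h1) h2
  · exact absurd (hiff.mpr h2) h1
  · simp

lemma levPart_homog (w : Fin n → ℝ) {a : ℝ} {g : Laur k n}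
    (hg : ∀ u ∈ g.coeff.support, pairR u w = a) (c : ℝ) :
    levPart w c g = if c = a then g else 0 := by
  split_ifs with h
  · subst h
    ext u
    rw [levPart_apply]
    split_ifs with h1
    · rfl
    · by_cases hu : u ∈ g.coeff.support
      · exact absurd (hg u hu) h1
      · exact (Finsupp.notMem_support_iff.mp hu).symm
  · refine levPart_eq_zero w c (fun u hu hc => h ?_)
    rw [← hc, hg u hu]

lemma levPart_mul_homog (w : Fin n → ℝ) {a : ℝ} {g : Laur k n}
    (hg : ∀ u ∈ g.coeff.support, pairR u w = a) (c : ℝ) (h : Laur k n) :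
    levPart w c (h * g) = levPart w (c - a) h * g := by
  induction h using AddMonoidAlgebra.induction_linear with
  | zero => simp [levPart_zero]
  | add f1 f2 ih1 ih2 =>
      rw [add_mul, levPart_add, ih1, ih2, levPart_add, add_mul]
  | single u b =>
      rw [levPart_single_mul, levPart_homog w hg, levPart_single]
      have hiff : c - pairR u w = a ↔ pairR u w = c - a := by constructor <;> intro h <;> linarith
      split_ifs with h1 h2 h2
      · rfl
      · exact absurd (hiff.mp h1) h2
      · exact absurd (hiff.mpr h2) h1
      · simp

-- ### unit monomial lemmas
lemma single_mul_single' (u v : Fin n → ℤ) (a b : k) :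
    (AddMonoidAlgebra.single u a : Laur k n) * AddMonoidAlgebra.single v b
      = AddMonoidAlgebra.single (u + v) (a * b) := AddMonoidAlgebra.single_mul_single ..

lemma single_neg_mul_single_cancel (u : Fin n → ℤ) (f : Laur k n) :
    AddMonoidAlgebra.single (-u) (1 : k) * (AddMonoidAlgebra.single u 1 * f) = f := by
  rw [← mul_assoc, single_mul_single', neg_add_cancel, one_mul, ← AddMonoidAlgebra.one_def,
    one_mul]

lemma single_mul_ne_zero {u : Fin n → ℤ} {f : Laur k n} (hf : f ≠ 0) :
    AddMonoidAlgebra.single u (1 : k) * f ≠ 0 := by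
  intro h
  have := congrArg (fun g => AddMonoidAlgebra.single (-u) (1 : k) * g) h
  simp only [mul_zero] at this
  rw [single_neg_mul_single_cancel] at this
  exact hf this

lemma mem_support_single_mul {u v : Fin n → ℤ} {f : Laur k n} :
    v ∈ (AddMonoidAlgebra.single u (1:k) * f).coeff.support ↔ (-u + v) ∈ f.coeff.support := by
  rw [Finsupp.mem_support_iff, Finsupp.mem_support_iff,
    show (AddMonoidAlgebra.single u (1:k) * f).coeff v = 1 * f.coeff (-u + v) from
      AddMonoidAlgebra.coeff_single_mul_apply f 1 u v, one_mul]

lemma tropR_single_mul (w : Fin n → ℝ) (u : Fin n → ℤ) {f : Laur k n} (hf : f ≠ 0) :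
    tropR w (AddMonoidAlgebra.single u (1:k) * f) = pairR u w + tropR w f := by
  apply le_antisymm
  · obtain ⟨v, hv, he⟩ := exists_tropR w hf
    have : (u + v) ∈ (AddMonoidAlgebra.single u (1:k) * f).coeff.support := by
      rw [mem_support_single_mul, neg_add_cancel_left]; exact hv
    calc tropR w (AddMonoidAlgebra.single u (1:k) * f) ≤ pairR (u + v) w := tropR_le w this
      _ = pairR u w + tropR w f := by rw [pairR_add, he]
  · apply le_tropR w (single_mul_ne_zero hf)
    intro v hv
    have hm := mem_support_single_mul.mp hv
    have := tropR_le w hm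
    have hp : pairR v w = pairR u w + pairR (-u + v) w := by
      rw [← pairR_add, add_neg_cancel_left]
    linarith

lemma initR_single_mul (w : Fin n → ℝ) (u : Fin n → ℤ) (f : Laur k n) :
    initR w (AddMonoidAlgebra.single u (1:k) * f)
      = AddMonoidAlgebra.single u (1:k) * initR w f := by
  by_cases hf : f = 0
  · subst hf; simp [initR_zero]
  · rw [initR_eq_levPart, tropR_single_mul w u hf, levPart_single_mul, initR_eq_levPart,
      add_sub_cancel_left]

-- ### toLaurent
def expZ (m : Fin n →₀ ℕ) : Fin n → ℤ := fun i => (m i : ℤ)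

lemma expZ_injective : Function.Injective (expZ (n := n)) := by
  intro a b h
  ext i
  have := congrFun h i
  simpa [expZ] using this

lemma expZ_add (a b : Fin n →₀ ℕ) : expZ (a + b) = expZ a + expZ b := by
  funext i; simp [expZ]

lemma expZ_single (i : Fin n) : expZ (Finsupp.single i 1) = Pi.single i 1 := by
  funext t
  simp only [expZ, Finsupp.single_apply, Pi.single_apply]
  split_ifs with h h2 h2 <;> simp_all [eq_comm]

lemma prod_single_eq {α : Type*} (s : Finset α) (g : α → (Fin n → ℤ)) (b : α → k) :
    ∏ i ∈ s, (AddMonoidAlgebra.single (g i) (b i) : Laur k n)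
      = AddMonoidAlgebra.single (∑ i ∈ s, g i) (∏ i ∈ s, b i) := by
  induction s using Finset.induction with
  | empty => simp [AddMonoidAlgebra.one_def]
  | insert _ _ h ih =>
      rw [Finset.prod_insert h, ih, single_mul_single', ← Finset.sum_insert h,
        ← Finset.prod_insert h]

lemma toLaurent_monomial (m : Fin n →₀ ℕ) (c : k) :
    toLaurent (MvPolynomial.monomial m c) = AddMonoidAlgebra.single (expZ m) c := by
  rw [MvPolynomial.monomial_eq, map_mul]
  have h1 : (toLaurent (MvPolynomial.C c) : Laur k n) = AddMonoidAlgebra.single 0 c := by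
    rw [show (MvPolynomial.C c : MvPolynomial (Fin n) k) = algebraMap k _ c from rfl,
      AlgHom.commutes]
    rfl
  have h2 : toLaurent (m.prod fun i e => MvPolynomial.X i ^ e)
      = AddMonoidAlgebra.single (expZ m) (1 : k) := by
    rw [Finsupp.prod, map_prod]
    have : ∀ i ∈ m.support, (toLaurent (MvPolynomial.X i ^ m i) : Laur k n)
        = AddMonoidAlgebra.single ((m i : ℤ) • Pi.single i 1) (1 : k) := by
      intro i _
      rw [map_pow]
      have hX : (toLaurent (MvPolynomial.X i) : Laur k n)
          = AddMonoidAlgebra.single (Pi.single i 1) 1 := by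
        simp [toLaurent, xu]
      rw [hX, AddMonoidAlgebra.single_pow, one_pow]
      norm_num
    rw [Finset.prod_congr rfl this, prod_single_eq]
    congr 1
    · funext t
      simp only [Finset.sum_apply, Pi.smul_apply, Pi.single_apply, smul_eq_mul, mul_ite,
        mul_one, mul_zero, expZ]
      rw [Finset.sum_ite_eq m.support t (fun i => ((m i : ℤ)))]
      split_ifs with h
      · rfl
      · simp [Finsupp.notMem_support_iff.mp h]
    · simp
  rw [h1, h2, single_mul_single', zero_add, mul_one]

lemma toLaurent_eq_mapDomain (p : MvPolynomial (Fin n) k) :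
    (toLaurent p : Laur k n).coeff = Finsupp.mapDomain expZ (AddMonoidAlgebra.coeff p) := by
  conv_lhs => rw [p.as_sum]
  rw [map_sum, AddMonoidAlgebra.coeff_sum]
  rw [Finsupp.mapDomain]
  rw [Finsupp.sum]
  exact Finset.sum_congr rfl (fun m _ => by rw [toLaurent_monomial]; rfl)

lemma toLaurent_coeff (p : MvPolynomial (Fin n) k) (m : Fin n →₀ ℕ) :
    (toLaurent p : Laur k n).coeff (expZ m) = MvPolynomial.coeff m p := by
  rw [toLaurent_eq_mapDomain, Finsupp.mapDomain_apply expZ_injective]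
  rfl

lemma support_toLaurent (p : MvPolynomial (Fin n) k) :
    (toLaurent p : Laur k n).coeff.support = p.support.image expZ := by
  rw [toLaurent_eq_mapDomain, Finsupp.mapDomain_support_of_injective expZ_injective]
  rfl

lemma toLaurent_ne_zero {p : MvPolynomial (Fin n) k} (hp : p ≠ 0) :
    (toLaurent p : Laur k n) ≠ 0 := by
  intro h
  have h' := congrArg AddMonoidAlgebra.coeff h
  rw [toLaurent_eq_mapDomain] at h'
  exact hp (AddMonoidAlgebra.coeff_injective
    (Finsupp.mapDomain_injective expZ_injective (h'.trans (by simp :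
      AddMonoidAlgebra.coeff (0 : Laur k n)
        = Finsupp.mapDomain expZ (AddMonoidAlgebra.coeff (0 : MvPolynomial (Fin n) k))))))

lemma exists_poly_of_nonneg_support (g : Laur k n)
    (h : ∀ v ∈ g.coeff.support, ∀ i, 0 ≤ v i) :
    ∃ p : MvPolynomial (Fin n) k, toLaurent p = g := by
  refine ⟨∑ v ∈ g.coeff.support, MvPolynomial.monomial
    (Finsupp.equivFunOnFinite.symm (fun i => (v i).toNat)) (g.coeff v), ?_⟩
  rw [map_sum]
  have : ∀ v ∈ g.coeff.support,
      (toLaurent (MvPolynomial.monomial (Finsupp.equivFunOnFinite.symm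
        (fun i => (v i).toNat)) (g.coeff v)) : Laur k n) = AddMonoidAlgebra.single v (g.coeff v) := by
    intro v hv
    rw [toLaurent_monomial]
    congr 1
    funext i
    simp only [expZ]
    exact Int.toNat_of_nonneg (h v hv i)
  rw [Finset.sum_congr rfl this]
  conv_rhs => rw [← AddMonoidAlgebra.sum_coeff_single g]
  rw [Finsupp.sum]

-- ### linear algebra lemmas
section LinAlg

variable {d : ℕ} {V : Submodule k (Fin n → k)} {M : Matroid (Fin n)}

lemma span_coordOn (V : Submodule k (Fin n → k)) :
    Submodule.span k (Set.range (coordOn V)) = ⊤ := by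
  rw [eq_top_iff]
  rintro ξ -
  obtain ⟨ψ, hψ⟩ :=
    (LinearMap.dualMap_surjective_iff.mpr (Submodule.injective_subtype V)) ξ
  have hψ2 : ψ = ∑ i, ψ (Pi.single i 1) • (LinearMap.proj i : (Fin n → k) →ₗ[k] k) := by
    refine LinearMap.ext fun x => ?_
    rw [LinearMap.sum_apply]
    conv_lhs => rw [← Finset.univ_sum_single x]
    rw [map_sum]
    refine Finset.sum_congr rfl (fun i _ => ?_)
    have : (Pi.single i (x i) : Fin n → k) = x i • (Pi.single i (1 : k) : Fin n → k) := by
      rw [← Pi.single_smul, smul_eq_mul, mul_one]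
    rw [this, map_smul]
    simp [LinearMap.proj, mul_comm]
  have hcoord : ∀ i, (Submodule.subtype V).dualMap (LinearMap.proj i) = coordOn V i :=
    fun i => rfl
  rw [← hψ, hψ2, map_sum]
  refine Submodule.sum_mem _ (fun i _ => ?_)
  rw [map_smul, hcoord]
  exact Submodule.smul_mem _ _ (Submodule.subset_span ⟨i, rfl⟩)

lemma injOn_of_indep {S : Set (Fin n)}
    (h : LinearIndependent k (fun i : S => coordOn V (i : Fin n))) :
    Set.InjOn (coordOn V) S :=
  Set.injOn_iff_injective.mpr h.injective

variable {B : Set (Fin n)} (hM : IsSubspaceMatroid V M) (hdim : Module.finrank k V = d)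
include hM

lemma base_spans (hB : M.IsBase B) :
    Submodule.span k (coordOn V '' B) = ⊤ := by
  by_contra hne
  have hsub : ¬ (Set.range (coordOn V) ⊆ (Submodule.span k (coordOn V '' B) : Set _)) := by
    intro hsub
    exact hne (top_unique ((span_coordOn V).ge.trans (Submodule.span_le.mpr hsub)))
  obtain ⟨ξ, hmem, hi⟩ := Set.not_subset.mp hsub
  obtain ⟨i, rfl⟩ := hmem
  have hindep := (hM.2 B).mp hB.indep
  have hinjB := injOn_of_indep hindep
  have hsetind : LinearIndependent k (fun x : (coordOn V '' B) => (x : Module.Dual k V)) :=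
    (linearIndepOn_iff_image hinjB).mp hindep
  have hins : LinearIndependent k
      (fun x : (insert (coordOn V i) (coordOn V '' B) : Set (Module.Dual k V)) =>
        (x : Module.Dual k V)) :=
    LinearIndepOn.id_insert hsetind hi
  have hiB : i ∉ B := fun hiB => hi (Submodule.subset_span ⟨i, hiB, rfl⟩)
  have hinj' : Set.InjOn (coordOn V) (insert i B) := by
    intro a ha b hb hab
    rcases ha with rfl | ha <;> rcases hb with rfl | hb
    · rfl
    · exact absurd (hab ▸ Submodule.subset_span ⟨b, hb, rfl⟩) hi
    · exact absurd (hab ▸ Submodule.subset_span ⟨a, ha, rfl⟩ : coordOn V b ∈ _) hi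
    · exact hinjB ha hb hab
  have him : coordOn V '' (insert i B) = insert (coordOn V i) (coordOn V '' B) :=
    Set.image_insert_eq
  have hfam : LinearIndependent k (fun x : (insert i B : Set (Fin n)) => coordOn V (x : Fin n)) := by
    show LinearIndepOn k (coordOn V) (insert i B)
    rw [linearIndepOn_iff_image hinj', him]
    exact hins
  have hindepM : M.Indep (insert i B) := (hM.2 _).mpr hfam
  have := Matroid.isBase_iff_maximal_indep.mp hB
  have hle := this.2 hindepM (Set.subset_insert i B)
  exact hiB (hle (Set.mem_insert i B))

include hdim

lemma card_le_of_indep {S : Set (Fin n)}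
    (h : LinearIndependent k (fun i : S => coordOn V (i : Fin n))) : S.ncard ≤ d := by
  haveI : Fintype ↥S := (Set.toFinite S).fintype
  have := h.fintype_card_le_finrank
  rw [Subspace.dual_finrank_eq, hdim] at this
  rwa [← Nat.card_coe_set_eq, Nat.card_eq_fintype_card]

lemma base_of_indep_ncard {S : Set (Fin n)} (hS : M.Indep S) (hcard : S.ncard = d) :
    M.IsBase S := by
  rw [Matroid.isBase_iff_maximal_indep]
  refine ⟨hS, fun T hT hST => ?_⟩
  have hTle : T.ncard ≤ d := card_le_of_indep hM hdim ((hM.2 T).mp hT)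
  exact (Set.eq_of_subset_of_ncard_le hST (hTle.trans hcard.ge) (Set.toFinite T)).ge

lemma base_ncard (hB : M.IsBase B) : B.ncard = d := by
  haveI : Fintype ↥B := (Set.toFinite B).fintype
  have hindep := (hM.2 B).mp hB.indep
  have hsp : ⊤ ≤ Submodule.span k (Set.range (fun i : B => coordOn V (i : Fin n))) := by
    rw [← Set.image_eq_range, base_spans hM hB]
  let bb : Module.Basis ↥B k (Module.Dual k V) := Module.Basis.mk hindep hsp
  have := Module.finrank_eq_card_basis bb
  rw [Subspace.dual_finrank_eq, hdim] at this
  rw [← Nat.card_coe_set_eq, Nat.card_eq_fintype_card, ← this]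

lemma exchange_base (hB : M.IsBase B) {i j : Fin n} (hi : i ∈ B) (hj : j ∉ B)
    (hij : coordOn V i ∈ Submodule.span k (coordOn V '' (insert j (B \ {i})))) :
    M.IsBase (insert j (B \ {i})) := by
  set S : Set (Fin n) := insert j (B \ {i}) with hS
  have hspan : Submodule.span k (coordOn V '' S) = ⊤ := by
    rw [eq_top_iff, ← base_spans hM hB, Submodule.span_le]
    rintro _ ⟨t, ht, rfl⟩
    by_cases hti : t = i
    · exact hti ▸ hij
    · exact Submodule.subset_span ⟨t, Set.mem_insert_of_mem _ ⟨ht, hti⟩, rfl⟩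
  have hcard : S.ncard = d := by
    rw [hS, Set.ncard_insert_of_notMem (fun h => hj h.1) ((Set.toFinite _)),
      Set.ncard_diff_singleton_add_one hi (Set.toFinite B), base_ncard hM hdim hB]
  haveI : Fintype ↥S := (Set.toFinite S).fintype
  have hfam : LinearIndependent k (fun x : S => coordOn V (x : Fin n)) := by
    apply linearIndependent_of_top_le_span_of_card_eq_finrank
    · rw [← Set.image_eq_range, hspan]
    · rw [Subspace.dual_finrank_eq, hdim, ← hcard, ← Nat.card_coe_set_eq,
        Nat.card_eq_fintype_card]
  exact base_of_indep_ncard hM hdim ((hM.2 S).mpr hfam) hcard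

lemma exists_mem_agree (hB : M.IsBase B) (y : Fin n → k) :
    ∃ v ∈ V, ∀ i ∈ B, v i = y i := by
  haveI : Fintype ↥B := (Set.toFinite B).fintype
  set T : V →ₗ[k] (↥B → k) := LinearMap.pi (fun i : ↥B => coordOn V (i : Fin n)) with hT
  have hker : Function.Injective T := by
    rw [← LinearMap.ker_eq_bot, Submodule.eq_bot_iff]
    intro v hv
    have hv' : T v = 0 := hv
    rw [← (Module.forall_dual_apply_eq_zero_iff k v)]
    intro ξ
    have hξ : ξ ∈ Submodule.span k (coordOn V '' B) := by
      rw [base_spans hM hB]; trivial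
    induction hξ using Submodule.span_induction with
    | mem x hx =>
        obtain ⟨i, hi, rfl⟩ := hx
        exact congrFun hv' ⟨i, hi⟩
    | zero => rfl
    | add a b _ _ ha hb => rw [LinearMap.add_apply, ha, hb, add_zero]
    | smul c a _ ha => rw [LinearMap.smul_apply, ha, smul_zero]
  have hrk : Module.finrank k V = Module.finrank k (↥B → k) := by
    rw [hdim, Module.finrank_pi, ← Nat.card_eq_fintype_card, Nat.card_coe_set_eq,
      base_ncard hM hdim hB]
  have hsurj : Function.Surjective T :=
    (LinearMap.injective_iff_surjective_of_finrank_eq_finrank hrk).mp hker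
  obtain ⟨v, hv⟩ := hsurj (fun i : ↥B => y i)
  exact ⟨v, v.2, fun i hi => congrFun hv ⟨i, hi⟩⟩

lemma eq_zero_of_vanishing_vars_base [Infinite k] (hB : M.IsBase B)
    {q : MvPolynomial (Fin n) k} (hq : q ∈ vanishingIdeal V)
    (hvars : ∀ m ∈ q.support, ∀ j, j ∉ B → m j = 0) : q = 0 := by
  apply MvPolynomial.funext (q := 0)
  intro y
  rw [map_zero]
  obtain ⟨v, hv, hagree⟩ := exists_mem_agree hM hdim hB y
  have h1 : MvPolynomial.eval y q = MvPolynomial.eval v q := by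
    rw [MvPolynomial.eval_eq', MvPolynomial.eval_eq']
    refine Finset.sum_congr rfl (fun m hm => ?_)
    congr 1
    refine Finset.prod_congr rfl (fun i _ => ?_)
    by_cases hmi : m i = 0
    · rw [hmi, pow_zero, pow_zero]
    · have hiB : i ∈ B := by
        by_contra hiB
        exact hmi (hvars m hm i hiB)
      rw [hagree i hiB]
  rw [h1]
  exact hq v hv

end LinAlg

-- ### the linear generators and standard representations
section Standard

open MvPolynomial

variable {d : ℕ} {V : Submodule k (Fin n → k)} {M : Matroid (Fin n)}

def Cfs (Bf : Finset (Fin n)) (cc : Fin n → Fin n → k) (j : Fin n) : Finset (Fin n) :=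
  Bf.filter (fun i => cc j i ≠ 0)

def ellP (Bf : Finset (Fin n)) (cc : Fin n → Fin n → k) (j : Fin n) : MvPolynomial (Fin n) k :=
  monomial (Finsupp.single j 1) 1
    - ∑ i ∈ Cfs Bf cc j, monomial (Finsupp.single i 1) (cc j i)

def odeg (Bf : Finset (Fin n)) (m : Fin n →₀ ℕ) : ℕ := ∑ j ∈ Bfᶜ, m j

def muP (Bf : Finset (Fin n)) (q : MvPolynomial (Fin n) k) : ℕ :=
  ∑ m ∈ q.support, (n + 1) ^ (odeg Bf m)

variable {Bf : Finset (Fin n)} {cc : Fin n → Fin n → k}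

lemma ellP_mem (hcc : ∀ j, coordOn V j = ∑ i ∈ Bf, cc j i • coordOn V i) (j : Fin n) :
    ellP Bf cc j ∈ vanishingIdeal V := by
  intro v hv
  have he : ∀ (i : Fin n) (c : k),
      MvPolynomial.eval v (monomial (Finsupp.single i 1) c) = c * v i := by
    intro i c
    rw [eval_monomial, Finsupp.prod_single_index (by simp)]
    simp
  have : MvPolynomial.eval v (ellP Bf cc j) = v j - ∑ i ∈ Cfs Bf cc j, cc j i * v i := by
    simp only [ellP, map_sub, map_sum, he, one_mul]
  rw [this]
  have hj := congrFun (congrArg (fun (f : ↥V →ₗ[k] k) => (f : ↥V → k)) (hcc j)) ⟨v, hv⟩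
  have hj' : v j = ∑ i ∈ Bf, cc j i * v i := by
    simpa [coordOn, LinearMap.proj] using hj
  have hfil : ∑ i ∈ Cfs Bf cc j, cc j i * v i = ∑ i ∈ Bf, cc j i * v i := by
    apply Finset.sum_filter_of_ne
    intro i _ hne hcz
    exact hne (by rw [hcz, zero_mul])
  rw [hj', hfil, sub_self]

lemma coeff_ellP_lead {j : Fin n} (hj : j ∉ Bf) :
    MvPolynomial.coeff (Finsupp.single j 1) (ellP Bf cc j) = 1 := by
  rw [ellP, coeff_sub, coeff_monomial, if_pos rfl]
  have : ∀ i ∈ Cfs Bf cc j,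
      MvPolynomial.coeff (Finsupp.single j 1) (monomial (Finsupp.single i 1) (cc j i)) = 0 := by
    intro i hi
    rw [coeff_monomial, if_neg]
    intro h
    have hij : i = j := by
      by_contra hne
      have := congrFun (congrArg (fun (f : Fin n →₀ ℕ) => (f : Fin n → ℕ)) h) i
      simp [Finsupp.single_apply, hne, Ne.symm hne] at this
    exact hj (hij ▸ (Finset.mem_filter.mp hi).1)
  rw [MvPolynomial.coeff_sum (σ := Fin n), Finset.sum_congr rfl this]
  simp

lemma ellP_ne_zero {j : Fin n} (hj : j ∉ Bf) : ellP Bf cc j ≠ 0 := by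
  intro h
  have := coeff_ellP_lead (cc := cc) hj
  rw [h] at this
  simp at this

lemma monomial_mul_ellP (t : Fin n →₀ ℕ) (c : k) (j : Fin n) :
    monomial t c * ellP Bf cc j
      = monomial (t + Finsupp.single j 1) c
        - ∑ i ∈ Cfs Bf cc j, monomial (t + Finsupp.single i 1) (c * cc j i) := by
  rw [ellP, mul_sub, Finset.mul_sum]
  congr 1
  · rw [monomial_mul, mul_one]
  · exact Finset.sum_congr rfl (fun i _ => by rw [monomial_mul])

lemma odeg_add (Bf : Finset (Fin n)) (a b : Fin n →₀ ℕ) :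
    odeg Bf (a + b) = odeg Bf a + odeg Bf b := by
  simp [odeg, Finset.sum_add_distrib]

lemma odeg_single_mem {i : Fin n} (hi : i ∈ Bf) : odeg Bf (Finsupp.single i 1) = 0 := by
  rw [odeg, Finset.sum_eq_zero]
  intro j hj
  rw [Finsupp.single_apply, if_neg]
  intro h
  exact (Finset.mem_compl.mp hj) (h ▸ hi)

lemma odeg_single_not_mem {j : Fin n} (hj : j ∉ Bf) : odeg Bf (Finsupp.single j 1) = 1 := by
  rw [odeg, Finset.sum_eq_single j]
  · simp
  · intro b _ hne
    rw [Finsupp.single_apply, if_neg (Ne.symm hne)]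
  · intro h
    exact absurd (Finset.mem_compl.mpr hj) h

lemma pairR_expZ_single (w : Fin n → ℝ) (i : Fin n) :
    pairR (expZ (Finsupp.single i 1)) w = w i := by
  rw [expZ_single, pairR_single]

end Standard

section StandardRep

open MvPolynomial

variable {d : ℕ} {V : Submodule k (Fin n → k)} {M : Matroid (Fin n)}
variable {Bf : Finset (Fin n)} {cc : Fin n → Fin n → k} {B : Set (Fin n)}

lemma support_sub_monomial_coeff (p : MvPolynomial (Fin n) k) (m₀ : Fin n →₀ ℕ) :
    (p - monomial m₀ (MvPolynomial.coeff m₀ p)).support ⊆ p.support.erase m₀ := by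
  intro m hm
  rw [MvPolynomial.mem_support_iff, coeff_sub, coeff_monomial] at hm
  rcases eq_or_ne m m₀ with rfl | hne
  · rw [if_pos rfl, sub_self] at hm
    exact absurd rfl hm
  · rw [if_neg (Ne.symm hne), sub_zero] at hm
    exact Finset.mem_erase.mpr ⟨hne, MvPolynomial.mem_support_iff.mpr hm⟩

lemma standard_rep [Infinite k]
    (hM : IsSubspaceMatroid V M) (hdim : Module.finrank k V = d)
    (hB : M.IsBase B) (hBf : (Bf : Set (Fin n)) = B)
    (hcc : ∀ j, coordOn V j = ∑ i ∈ Bf, cc j i • coordOn V i)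
    (hdn : d < n) (w : Fin n → ℝ)
    (hwt : ∀ j ∈ Bfᶜ, ∀ i ∈ Cfs Bf cc j, w j ≤ w i)
    {q : MvPolynomial (Fin n) k} (hq : q ∈ vanishingIdeal V) :
    ∃ h : Fin n → MvPolynomial (Fin n) k,
      q = ∑ j ∈ Bfᶜ, h j * ellP Bf cc j ∧
      ∀ c : ℝ, (∀ m ∈ q.support, c ≤ pairR (expZ m) w) →
        ∀ j ∈ Bfᶜ, ∀ m ∈ (h j).support, c ≤ pairR (expZ m) w + w j := by
  suffices H : ∀ N : ℕ, ∀ q : MvPolynomial (Fin n) k, q ∈ vanishingIdeal V → muP Bf q ≤ N →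
      ∃ h : Fin n → MvPolynomial (Fin n) k,
        q = ∑ j ∈ Bfᶜ, h j * ellP Bf cc j ∧
        ∀ c : ℝ, (∀ m ∈ q.support, c ≤ pairR (expZ m) w) →
          ∀ j ∈ Bfᶜ, ∀ m ∈ (h j).support, c ≤ pairR (expZ m) w + w j by
    exact H (muP Bf q) q hq le_rfl
  intro N
  induction N with
  | zero =>
      intro q hq hmu
      have hq0 : q = 0 := by
        by_contra hne
        obtain ⟨m, hm⟩ := Finsupp.support_nonempty_iff.mpr (fun h => hne (AddMonoidAlgebra.coeff_injective h))
        have h1 : 1 ≤ (n + 1) ^ (odeg Bf m) := Nat.one_le_pow _ _ (Nat.succ_pos n)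
        have : 1 ≤ muP Bf q := le_trans h1 (Finset.single_le_sum
          (f := fun m => (n+1)^(odeg Bf m)) (fun _ _ => Nat.zero_le _) hm)
        omega
      exact ⟨0, by simp [hq0], by intro c _ j _ m hm; simp at hm⟩
  | succ N ih =>
      intro q hq hmu
      by_cases hbase : ∀ m ∈ q.support, ∀ j, j ∉ Bf → m j = 0
      · have hq0 : q = 0 := by
          refine eq_zero_of_vanishing_vars_base hM hdim hB hq ?_
          intro m hm j hj
          exact hbase m hm j (by rwa [← hBf, Finset.mem_coe] at hj)
        exact ⟨0, by simp [hq0], by intro c _ j _ m hm; simp at hm⟩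
      · push_neg at hbase
        obtain ⟨m₀, hm₀, j₀, hj₀Bf, hj₀ne⟩ := hbase
        have hj₀c : j₀ ∈ Bfᶜ := Finset.mem_compl.mpr hj₀Bf
        set t : Fin n →₀ ℕ := m₀ - Finsupp.single j₀ 1 with htdef
        have h1le : 1 ≤ m₀ j₀ := Nat.one_le_iff_ne_zero.mpr hj₀ne
        have ht : t + Finsupp.single j₀ 1 = m₀ := by
          ext i
          simp only [htdef, Finsupp.add_apply, Finsupp.tsub_apply, Finsupp.single_apply]
          split_ifs with h
          · subst h; omega
          · omega
        have hexpZ : expZ t + Pi.single j₀ 1 = expZ m₀ := by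
          rw [← expZ_single, ← expZ_add, ht]
        have hpt : pairR (expZ t) w + w j₀ = pairR (expZ m₀) w := by
          rw [← hexpZ, pairR_add, pairR_single]
        have hpti : ∀ i : Fin n, pairR (expZ (t + Finsupp.single i 1)) w
            = pairR (expZ t) w + w i := by
          intro i
          rw [expZ_add, pairR_add, expZ_single, pairR_single]
        set c0 := MvPolynomial.coeff m₀ q with hc0
        set q' := q - monomial t c0 * ellP Bf cc j₀ with hq'def
        have hq'eq : q' = (q - monomial m₀ c0)
            + ∑ i ∈ Cfs Bf cc j₀, monomial (t + Finsupp.single i 1) (c0 * cc j₀ i) := by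
          rw [hq'def, monomial_mul_ellP, ht]
          ring
        have hsupp' : q'.support ⊆ (q.support.erase m₀)
            ∪ (Cfs Bf cc j₀).image (fun i => t + Finsupp.single i 1) := by
          rw [hq'eq]
          refine subset_trans MvPolynomial.support_add (Finset.union_subset_union ?_ ?_)
          · exact support_sub_monomial_coeff q m₀
          · refine subset_trans MvPolynomial.support_sum (Finset.biUnion_subset.mpr ?_)
            intro i hi m hm
            have hm' : m ∈ (monomial (t + Finsupp.single i 1) (c0 * cc j₀ i)).support := hm
            rw [MvPolynomial.support_monomial] at hm'
            split_ifs at hm'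
            · simp at hm'
            · rw [Finset.mem_singleton] at hm'
              exact Finset.mem_image.mpr ⟨i, hi, hm'.symm⟩
        have hlow : ∀ c : ℝ, (∀ m ∈ q.support, c ≤ pairR (expZ m) w) →
            (∀ m ∈ q'.support, c ≤ pairR (expZ m) w) := by
          intro c hc m hm
          rcases Finset.mem_union.mp (hsupp' hm) with h | h
          · exact hc m (Finset.mem_of_mem_erase h)
          · obtain ⟨i, hi, rfl⟩ := Finset.mem_image.mp h
            have hwi : w j₀ ≤ w i := hwt j₀ hj₀c i hi
            have := hc m₀ hm₀
            rw [hpti i]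
            linarith
        -- the measure decreases
        have hcardBf : Bf.card = d := by
          have := base_ncard hM hdim hB
          rwa [← hBf, Set.ncard_coe_finset] at this
        have hinj : ∀ x ∈ Cfs Bf cc j₀, ∀ y ∈ Cfs Bf cc j₀,
            t + Finsupp.single x 1 = t + Finsupp.single y 1 → x = y := by
          intro x _ y _ hxy
          have := add_left_cancel hxy
          exact Finsupp.single_left_injective (one_ne_zero) this
        have hodegim : ∀ i ∈ Cfs Bf cc j₀,
            odeg Bf (t + Finsupp.single i 1) = odeg Bf t := by
          intro i hi
          rw [odeg_add, odeg_single_mem (Finset.mem_filter.mp hi).1, add_zero]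
        have hodegm₀ : odeg Bf m₀ = odeg Bf t + 1 := by
          rw [← ht, odeg_add, odeg_single_not_mem hj₀Bf]
        have hPpos : 0 < (n + 1) ^ (odeg Bf t) := Nat.pow_pos (Nat.succ_pos n)
        have hcardC : (Cfs Bf cc j₀).card ≤ d := by
          rw [← hcardBf]
          exact Finset.card_le_card (Finset.filter_subset _ _)
        have hQP : (Cfs Bf cc j₀).card * (n + 1) ^ (odeg Bf t) < (n + 1) ^ (odeg Bf m₀) := by
          rw [hodegm₀, pow_succ]
          have h1 : (Cfs Bf cc j₀).card < n + 1 := by omega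
          nlinarith [hPpos, h1]
        have hmu' : muP Bf q' < muP Bf q := by
          have hA : ∑ m ∈ q.support.erase m₀, (n+1)^(odeg Bf m) + (n+1)^(odeg Bf m₀)
              = muP Bf q := Finset.sum_erase_add _ _ hm₀
          have h2 : muP Bf q' ≤ ∑ m ∈ (q.support.erase m₀)
              ∪ (Cfs Bf cc j₀).image (fun i => t + Finsupp.single i 1), (n+1)^(odeg Bf m) :=
            Finset.sum_le_sum_of_subset hsupp'
          have h3 : ∑ m ∈ (q.support.erase m₀)
              ∪ (Cfs Bf cc j₀).image (fun i => t + Finsupp.single i 1), (n+1)^(odeg Bf m)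
              ≤ ∑ m ∈ q.support.erase m₀, (n+1)^(odeg Bf m)
                + ∑ m ∈ (Cfs Bf cc j₀).image (fun i => t + Finsupp.single i 1),
                    (n+1)^(odeg Bf m) := by
            have := Finset.sum_union_inter (s₁ := q.support.erase m₀)
              (s₂ := (Cfs Bf cc j₀).image (fun i => t + Finsupp.single i 1))
              (f := fun m => (n+1)^(odeg Bf m))
            omega
          have h4 : ∑ m ∈ (Cfs Bf cc j₀).image (fun i => t + Finsupp.single i 1),
              (n+1)^(odeg Bf m) = (Cfs Bf cc j₀).card * (n+1)^(odeg Bf t) := by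
            rw [Finset.sum_image hinj]
            rw [Finset.sum_congr rfl (fun i hi => by rw [hodegim i hi])]
            rw [Finset.sum_const, smul_eq_mul]
          omega
        have hq'mem : q' ∈ vanishingIdeal V :=
          Submodule.sub_mem _ hq (Ideal.mul_mem_left _ _ (ellP_mem hcc j₀))
        obtain ⟨h', hrep', hlev'⟩ := ih q' hq'mem (by omega)
        refine ⟨Function.update h' j₀ (h' j₀ + monomial t c0), ?_, ?_⟩
        · have hsum : ∑ j ∈ Bfᶜ, (Function.update h' j₀ (h' j₀ + monomial t c0)) j
              * ellP Bf cc j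
              = (h' j₀ + monomial t c0) * ellP Bf cc j₀
                + ∑ j ∈ Bfᶜ \ {j₀}, h' j * ellP Bf cc j := by
            rw [Finset.sum_congr rfl (g := fun j => Function.update
                (fun j => h' j * ellP Bf cc j) j₀
                ((h' j₀ + monomial t c0) * ellP Bf cc j₀) j) (fun j _ => by
              rcases eq_or_ne j j₀ with rfl | hne
              · simp only [Function.update_self]
              · simp only [Function.update_of_ne hne])]
            exact Finset.sum_update_of_mem hj₀c _ _
          rw [hsum]
          have hsum2 : ∑ j ∈ Bfᶜ, h' j * ellP Bf cc j
              = h' j₀ * ellP Bf cc j₀ + ∑ j ∈ Bfᶜ \ {j₀}, h' j * ellP Bf cc j := by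
            rw [Finset.sum_eq_add_sum_sdiff_singleton_of_mem hj₀c]
          have : q = q' + monomial t c0 * ellP Bf cc j₀ := by
            rw [hq'def]; ring
          rw [this, hrep', hsum2]
          ring
        · intro c hc j hj m hm
          have hc' := hlow c hc
          rcases eq_or_ne j j₀ with rfl | hne
          · simp only [Function.update_self] at hm
            rcases Finset.mem_union.mp (MvPolynomial.support_add hm) with h | h
            · exact hlev' c hc' j hj m h
            · rw [MvPolynomial.support_monomial] at h
              split_ifs at h
              · simp at h
              · rw [Finset.mem_singleton] at h
                subst h
                have := hc m₀ hm₀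
                linarith [hpt]
          · simp only [Function.update_of_ne hne] at hm
            exact hlev' c hc' j hj m hm

end StandardRep

section LaurentSide

open MvPolynomial

variable {d : ℕ} {V : Submodule k (Fin n → k)} {M : Matroid (Fin n)}
variable {Bf : Finset (Fin n)} {cc : Fin n → Fin n → k} {B : Set (Fin n)}

lemma mem_support_toLaurent_ellP {j : Fin n} {u : Fin n → ℤ}
    (hu : u ∈ (toLaurent (ellP Bf cc j) : Laur k n).coeff.support) :
    u = Pi.single j 1 ∨ ∃ i ∈ Cfs Bf cc j, u = Pi.single i 1 := by
  rw [support_toLaurent] at hu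
  obtain ⟨m, hm, rfl⟩ := Finset.mem_image.mp hu
  have hm' : m ∈ (monomial (Finsupp.single j 1) (1:k)).support
      ∪ (∑ i ∈ Cfs Bf cc j, monomial (Finsupp.single i 1) (cc j i)).support := by
    rw [ellP] at hm
    exact MvPolynomial.support_sub _ _ _ hm
  rcases Finset.mem_union.mp hm' with h | h
  · left
    rw [MvPolynomial.support_monomial, if_neg one_ne_zero, Finset.mem_singleton] at h
    rw [h, expZ_single]
  · right
    have := MvPolynomial.support_sum h
    obtain ⟨i, hi, hmem⟩ := Finset.mem_biUnion.mp this
    have h2 : m ∈ (monomial (Finsupp.single i 1) (cc j i)).support := hmem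
    rw [MvPolynomial.support_monomial] at h2
    split_ifs at h2
    · simp at h2
    · rw [Finset.mem_singleton] at h2
      exact ⟨i, hi, by rw [h2, expZ_single]⟩

lemma lead_mem_support_toLaurent_ellP {j : Fin n} (hj : j ∉ Bf) :
    Pi.single j 1 ∈ (toLaurent (ellP Bf cc j) : Laur k n).coeff.support := by
  rw [Finsupp.mem_support_iff, ← expZ_single, toLaurent_coeff, coeff_ellP_lead hj]
  exact one_ne_zero

lemma tropR_toLaurent_ellP (w : Fin n → ℝ) {j : Fin n} (hj : j ∉ Bf)
    (hwt : ∀ i ∈ Cfs Bf cc j, w j ≤ w i) :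
    tropR w (toLaurent (ellP Bf cc j) : Laur k n) = w j := by
  apply le_antisymm
  · have := tropR_le w (lead_mem_support_toLaurent_ellP (cc := cc) hj)
    rwa [pairR_single] at this
  · apply le_tropR w (toLaurent_ne_zero (ellP_ne_zero hj))
    intro u hu
    rcases mem_support_toLaurent_ellP hu with rfl | ⟨i, hi, rfl⟩
    · rw [pairR_single]
    · rw [pairR_single]
      exact hwt i hi

lemma gl_homog (w : Fin n → ℝ) {j : Fin n} (hj : j ∉ Bf)
    (hwt : ∀ i ∈ Cfs Bf cc j, w j ≤ w i) :
    ∀ u ∈ (initR w (toLaurent (ellP Bf cc j) : Laur k n)).coeff.support, pairR u w = w j := by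
  intro u hu
  rw [pairR_of_mem_initR w _ hu, tropR_toLaurent_ellP w hj hwt]

lemma rl_levels (w : Fin n → ℝ) {j : Fin n} (hj : j ∉ Bf)
    (hwt : ∀ i ∈ Cfs Bf cc j, w j ≤ w i) :
    ∀ u ∈ ((toLaurent (ellP Bf cc j) : Laur k n)
      - initR w (toLaurent (ellP Bf cc j))).coeff.support, w j < pairR u w := by
  intro u hu
  have hsplit : (toLaurent (ellP Bf cc j) : Laur k n) - initR w (toLaurent (ellP Bf cc j))
      = AddMonoidAlgebra.ofCoeff (Finsupp.filter
          (fun u => ¬ (pairR u w = tropR w (toLaurent (ellP Bf cc j) : Laur k n)))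
          (toLaurent (ellP Bf cc j)).coeff) := by
    have := congrArg AddMonoidAlgebra.ofCoeff (Finsupp.filter_pos_add_filter_neg
      (toLaurent (ellP Bf cc j) : Laur k n).coeff
      (fun u => pairR u w = tropR w (toLaurent (ellP Bf cc j) : Laur k n)))
    rw [AddMonoidAlgebra.ofCoeff_add, AddMonoidAlgebra.ofCoeff_coeff] at this
    rw [initR]
    linear_combination (norm := module) -this
  rw [hsplit, AddMonoidAlgebra.coeff_ofCoeff, Finsupp.support_filter] at hu
  obtain ⟨hu1, hu2⟩ := Finset.mem_filter.mp hu
  have hge := tropR_le w hu1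
  rw [tropR_toLaurent_ellP w hj hwt] at hge hu2
  exact lt_of_le_of_ne hge (Ne.symm hu2)

lemma initR_toLaurent_mem_span [Infinite k]
    (hM : IsSubspaceMatroid V M) (hdim : Module.finrank k V = d)
    (hB : M.IsBase B) (hBf : (Bf : Set (Fin n)) = B)
    (hcc : ∀ j, coordOn V j = ∑ i ∈ Bf, cc j i • coordOn V i)
    (hdn : d < n) (w : Fin n → ℝ)
    (hwt : ∀ j ∈ Bfᶜ, ∀ i ∈ Cfs Bf cc j, w j ≤ w i)
    {q : MvPolynomial (Fin n) k} (hq : q ∈ vanishingIdeal V) :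
    initR w (toLaurent q : Laur k n)
      ∈ Ideal.span ((fun j => initR w (toLaurent (ellP Bf cc j) : Laur k n)) '' ↑(Bfᶜ)) := by
  by_cases h0 : (toLaurent q : Laur k n) = 0
  · rw [h0, initR_zero]
    exact Submodule.zero_mem _
  obtain ⟨h, hrep, hlev⟩ := standard_rep hM hdim hB hBf hcc hdn w hwt hq
  set c₀ := tropR w (toLaurent q : Laur k n) with hc₀
  have hlb : ∀ m ∈ q.support, c₀ ≤ pairR (expZ m) w := by
    intro m hm
    apply tropR_le w
    rw [support_toLaurent]
    exact Finset.mem_image.mpr ⟨m, hm, rfl⟩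
  have hlev' := hlev c₀ hlb
  have hLrep : (toLaurent q : Laur k n)
      = ∑ j ∈ Bfᶜ, toLaurent (h j) * toLaurent (ellP Bf cc j) := by
    rw [hrep, map_sum]
    exact Finset.sum_congr rfl (fun j _ => map_mul _ _ _)
  rw [initR_eq_levPart, ← hc₀, hLrep, levPart_sum]
  refine Ideal.sum_mem _ (fun j hj => ?_)
  have hjBf : j ∉ Bf := Finset.mem_compl.mp hj
  have hwtj := hwt j hj
  have hsplit : toLaurent (ellP Bf cc j) = initR w (toLaurent (ellP Bf cc j) : Laur k n)
      + ((toLaurent (ellP Bf cc j) : Laur k n) - initR w (toLaurent (ellP Bf cc j))) := by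
    ring
  rw [hsplit, mul_add, levPart_add]
  have h2 : levPart w c₀ (toLaurent (h j) *
      ((toLaurent (ellP Bf cc j) : Laur k n) - initR w (toLaurent (ellP Bf cc j)))) = 0 := by
    apply levPart_eq_zero
    intro u hu
    have hmem := AddMonoidAlgebra.support_coeff_mul_subset _ _ hu
    obtain ⟨a, ha, b, hb, rfl⟩ := Finset.mem_add.mp hmem
    have hblev := rl_levels w hjBf hwtj b hb
    have halev : c₀ ≤ pairR a w + w j := by
      rw [support_toLaurent] at ha
      obtain ⟨m, hm, rfl⟩ := Finset.mem_image.mp ha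
      exact hlev' j hj m hm
    rw [pairR_add]
    intro heq
    linarith
  rw [h2, add_zero, levPart_mul_homog w (gl_homog w hjBf hwtj) c₀]
  exact Ideal.mul_mem_left _ _ (Ideal.subset_span ⟨j, by simpa using hj, rfl⟩)

lemma initR_mem_span_of_mem_map [Infinite k]
    (hM : IsSubspaceMatroid V M) (hdim : Module.finrank k V = d)
    (hB : M.IsBase B) (hBf : (Bf : Set (Fin n)) = B)
    (hcc : ∀ j, coordOn V j = ∑ i ∈ Bf, cc j i • coordOn V i)
    (hdn : d < n) (w : Fin n → ℝ)
    (hwt : ∀ j ∈ Bfᶜ, ∀ i ∈ Cfs Bf cc j, w j ≤ w i)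
    {f : Laur k n} (hf : f ∈ Ideal.map (toLaurent (k := k) (n := n)) (vanishingIdeal V)) :
    initR w f
      ∈ Ideal.span ((fun j => initR w (toLaurent (ellP Bf cc j) : Laur k n)) '' ↑(Bfᶜ)) := by
  by_cases h0 : f = 0
  · rw [h0, initR_zero]; exact Submodule.zero_mem _
  have hf' : f ∈ Ideal.span (⇑toLaurent '' (vanishingIdeal V : Set (MvPolynomial (Fin n) k))) :=
    hf
  obtain ⟨c, hcsupp, hcsum⟩ := Submodule.mem_span_set.mp hf'
  set U : Finset (Fin n → ℤ) := c.support.biUnion (fun g => (c g).coeff.support) with hU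
  set u : Fin n → ℤ := fun i => ((U.sup (fun v => (-(v i)).toNat) : ℕ) : ℤ) with hu
  have hnonneg : ∀ g ∈ c.support, ∀ x ∈ (AddMonoidAlgebra.single u (1:k) * c g).coeff.support,
      ∀ i, 0 ≤ x i := by
    intro g hg x hx i
    have hxv := mem_support_single_mul.mp hx
    have hvU : (-u + x) ∈ U := Finset.mem_biUnion.mpr ⟨g, hg, hxv⟩
    have hle := Finset.le_sup (f := fun v => (-(v i)).toNat) hvU
    have h2 : -((-u + x) i) ≤ ((-((-u + x) i)).toNat : ℤ) := Int.self_le_toNat _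
    have h5 : (((-((-u + x) i)).toNat : ℕ) : ℤ) ≤ u i := by
      simp only [hu]
      exact_mod_cast hle
    have h3 : ((-u + x) i) = - u i + x i := rfl
    rw [h3] at h2 h5
    clear hle hvU hxv hx
    clear_value u U
    omega
  -- choose polynomial preimages
  have hbex : ∀ g ∈ c.support, ∃ p : MvPolynomial (Fin n) k,
      toLaurent p = AddMonoidAlgebra.single u (1:k) * c g := by
    intro g hg
    exact exists_poly_of_nonneg_support _ (hnonneg g hg)
  have hpex : ∀ g ∈ c.support, ∃ p ∈ vanishingIdeal V, toLaurent p = g := by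
    intro g hg
    obtain ⟨p, hp, hpe⟩ := hcsupp hg
    exact ⟨p, hp, hpe⟩
  choose bp hbp using hbex
  choose pp hpp1 hpp2 using hpex
  set q : MvPolynomial (Fin n) k := ∑ g ∈ c.support.attach, bp g g.2 * pp g g.2 with hqdef
  have hqmem : q ∈ vanishingIdeal V := by
    refine Submodule.sum_mem _ (fun g _ => ?_)
    exact Ideal.mul_mem_left _ _ (hpp1 g g.2)
  have hqL : (toLaurent q : Laur k n) = AddMonoidAlgebra.single u (1:k) * f := by
    rw [hqdef, map_sum]
    have : ∀ g : {x // x ∈ c.support},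
        (toLaurent (bp g g.2 * pp g g.2) : Laur k n)
          = AddMonoidAlgebra.single u (1:k) * (c g * g) := by
      intro g
      rw [map_mul, hbp g g.2, hpp2 g g.2, mul_assoc]
    rw [Finset.sum_congr rfl (fun g _ => this g)]
    rw [← Finset.mul_sum]
    congr 1
    rw [← hcsum, Finsupp.sum, ← Finset.sum_attach c.support (fun g => c g • g)]
    exact Finset.sum_congr rfl (fun g _ => by rw [smul_eq_mul])
  have hkey := initR_toLaurent_mem_span hM hdim hB hBf hcc hdn w hwt hqmem
  rw [hqL, initR_single_mul] at hkey
  have : initR w f = AddMonoidAlgebra.single (-u) (1:k)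
      * (AddMonoidAlgebra.single u (1:k) * initR w f) :=
    (single_neg_mul_single_cancel u (initR w f)).symm
  rw [this]
  exact Ideal.mul_mem_left _ _ hkey

end LaurentSide

lemma image_coe_eq_range {α β : Type*} {m : ℕ} (s : Finset α) (e : Fin m ≃ ↥s) (F : α → β) :
    F '' ↑s = Set.range (fun t => F ((e t : ↥s) : α)) := by
  ext b
  constructor
  · rintro ⟨a, ha, rfl⟩
    exact ⟨e.symm ⟨a, ha⟩, by simp⟩
  · rintro ⟨t, rfl⟩
    exact ⟨((e t : ↥s) : α), (e t).2, rfl⟩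

/-- Let `V ⊆ kⁿ` be a `d`-dimensional subspace (`1 ≤ d < n`) not
contained in any coordinate hyperplane, with matroid `M`, and let `w ∈ ℝⁿ`.  Then there are
`n − d` polynomials `f₁,…,f_{n−d}` generating the vanishing ideal `I(V)`, whose initial
forms generate the initial ideal `in_w (I(V)·k[x₁^{±1},…,x_n^{±1}])`, and such that
`∑ᵢ wᵢ − ∑ⱼ trop(fⱼ)(w) = wt_M(w)`, where `wt_M(w)` is the maximum of `∑_{i∈B} wᵢ` over
bases `B` of `M`. -/
theorem exists_generators_computing_weight
    {k : Type*} [Field k] [IsAlgClosed k] {n d : ℕ}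
    (hd : 1 ≤ d) (hdn : d < n) (V : Submodule k (Fin n → k))
    (hdim : Module.finrank k V = d)
    (hcoord : ∀ i : Fin n, ∃ v ∈ V, v i ≠ 0)
    (M : Matroid (Fin n)) (hM : IsSubspaceMatroid V M)
    (w : Fin n → ℝ) :
    ∃ f : Fin (n - d) → MvPolynomial (Fin n) k,
      (∀ j, f j ≠ 0) ∧
      Ideal.span (Set.range f) = vanishingIdeal V ∧
      Ideal.span (Set.range fun j => initR w (toLaurent (f j))) =
        initIdealR w (Ideal.map (toLaurent (k := k) (n := n)) (vanishingIdeal V)) ∧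
      (∑ i, w i) - (∑ j, tropR w (toLaurent (f j))) =
        sSup {x : ℝ | ∃ B : Set (Fin n), M.IsBase B ∧ x = ∑ᶠ i ∈ B, w i} := by
  haveI : Infinite k := inferInstance
  -- choose a maximal-weight base, as a Finset
  classical
  obtain ⟨B₀, hB₀⟩ := M.exists_isBase
  set bset : Finset (Finset (Fin n)) :=
    Finset.univ.filter (fun s : Finset (Fin n) => M.IsBase ↑s) with hbset
  have hbne : bset.Nonempty := by
    refine ⟨(Set.toFinite B₀).toFinset, ?_⟩
    rw [hbset, Finset.mem_filter]
    exact ⟨Finset.mem_univ _, by rwa [Set.Finite.coe_toFinset]⟩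
  obtain ⟨Bf, hBfmem, hBfmax⟩ := Finset.exists_max_image bset (fun s => ∑ i ∈ s, w i) hbne
  have hB : M.IsBase (↑Bf : Set (Fin n)) := by
    rw [hbset, Finset.mem_filter] at hBfmem
    exact hBfmem.2
  have hmax : ∀ s : Finset (Fin n), M.IsBase (↑s : Set (Fin n)) →
      ∑ i ∈ s, w i ≤ ∑ i ∈ Bf, w i := by
    intro s hs
    exact hBfmax s (by rw [hbset, Finset.mem_filter]; exact ⟨Finset.mem_univ _, hs⟩)
  -- the coefficients
  have hrepex : ∀ j : Fin n, ∃ cF : ↥Bf → k,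
      ∑ i : ↥Bf, cF i • coordOn V (i : Fin n) = coordOn V j := by
    intro j
    rw [← Submodule.mem_span_range_iff_exists_fun]
    have hr : Set.range (fun i : ↥Bf => coordOn V (i : Fin n))
        = coordOn V '' (↑Bf : Set (Fin n)) := by
      rw [Set.image_eq_range]
      rfl
    rw [hr, base_spans hM hB]
    trivial
  choose cF hcF using hrepex
  set cc : Fin n → Fin n → k :=
    fun j i => if h : i ∈ Bf then cF j ⟨i, h⟩ else 0 with hccdef
  have hcc : ∀ j, coordOn V j = ∑ i ∈ Bf, cc j i • coordOn V i := by
    intro j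
    rw [← hcF j, Finset.univ_eq_attach,
      ← Finset.sum_attach Bf (fun i => cc j i • coordOn V i)]
    refine Finset.sum_congr rfl (fun i _ => ?_)
    simp only [hccdef, dif_pos i.2, Subtype.eta]
  -- exchange inequality
  have hcardBf : Bf.card = d := by
    have := base_ncard hM hdim hB
    rwa [Set.ncard_coe_finset] at this
  have hwt : ∀ j ∈ Bfᶜ, ∀ i ∈ Cfs Bf cc j, w j ≤ w i := by
    intro j hj i hi
    have hjBf : j ∉ Bf := Finset.mem_compl.mp hj
    obtain ⟨hiBf, hcne⟩ := Finset.mem_filter.mp hi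
    have hij : i ≠ j := fun h => hjBf (h ▸ hiBf)
    -- the exchanged set, as a Finset
    set Sf : Finset (Fin n) := insert j (Bf.erase i) with hSf
    have hScoe : (↑Sf : Set (Fin n)) = insert j ((↑Bf : Set (Fin n)) \ {i}) := by
      rw [hSf, Finset.coe_insert, Finset.coe_erase]
    -- coordOn V i lies in the span of the others
    have hspan : coordOn V i ∈
        Submodule.span k (coordOn V '' (insert j ((↑Bf : Set (Fin n)) \ {i}))) := by
      have hsum := hcc j
      rw [← Finset.add_sum_erase Bf _ hiBf] at hsum
      have hval : coordOn V i = (cc j i)⁻¹ •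
          (coordOn V j - ∑ t ∈ Bf.erase i, cc j t • coordOn V t) := by
        rw [hsum]
        rw [add_sub_cancel_right, smul_smul, inv_mul_cancel₀ hcne, one_smul]
      rw [hval]
      refine Submodule.smul_mem _ _ (Submodule.sub_mem _ ?_ ?_)
      · exact Submodule.subset_span ⟨j, Set.mem_insert _ _, rfl⟩
      · refine Submodule.sum_mem _ (fun t ht => Submodule.smul_mem _ _ ?_)
        obtain ⟨hti, htBf⟩ := Finset.mem_erase.mp ht
        exact Submodule.subset_span ⟨t, Set.mem_insert_of_mem _ ⟨htBf, hti⟩, rfl⟩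
    have hbase2 : M.IsBase (insert j ((↑Bf : Set (Fin n)) \ {i})) :=
      exchange_base hM hdim hB hiBf (by simpa using hjBf) hspan
    have hW : ∑ t ∈ Sf, w t ≤ ∑ t ∈ Bf, w t := by
      apply hmax
      rw [hScoe]
      exact hbase2
    have h1 : ∑ t ∈ Sf, w t = w j + ∑ t ∈ Bf.erase i, w t := by
      rw [hSf, Finset.sum_insert (fun h => hjBf (Finset.mem_of_mem_erase h))]
    have h2 : ∑ t ∈ Bf, w t = w i + ∑ t ∈ Bf.erase i, w t :=
      (Finset.add_sum_erase Bf w hiBf).symm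
    rw [h1, h2] at hW
    linarith
  -- the generators
  have hcardJ : (Bfᶜ : Finset (Fin n)).card = n - d := by
    rw [Finset.card_compl, hcardBf, Fintype.card_fin]
  set e : Fin (n - d) ≃ ↥(Bfᶜ : Finset (Fin n)) := (Finset.equivFinOfCardEq hcardJ).symm
    with hedef
  refine ⟨fun t => ellP Bf cc ((e t : ↥(Bfᶜ : Finset (Fin n))) : Fin n), ?_, ?_, ?_, ?_⟩
  · intro t
    exact ellP_ne_zero (Finset.mem_compl.mp (e t).2)
  · -- generation of the vanishing ideal
    apply le_antisymm
    · rw [Ideal.span_le]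
      rintro _ ⟨t, rfl⟩
      exact ellP_mem hcc _
    · intro q hq
      obtain ⟨h, hrep, -⟩ := standard_rep hM hdim hB rfl hcc hdn w hwt hq
      rw [hrep]
      refine Submodule.sum_mem _ (fun j hj => ?_)
      refine Ideal.mul_mem_left _ _ (Submodule.subset_span ?_)
      rw [← image_coe_eq_range (Bfᶜ : Finset (Fin n)) e (ellP Bf cc)]
      exact ⟨j, hj, rfl⟩
  · -- generation of the initial ideal
    apply le_antisymm
    · rw [Ideal.span_le]
      rintro _ ⟨t, rfl⟩
      refine Submodule.subset_span ?_
      exact ⟨toLaurent (ellP Bf cc ((e t : ↥(Bfᶜ : Finset (Fin n))) : Fin n)),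
        Ideal.mem_map_of_mem _ (ellP_mem hcc _), rfl⟩
    · rw [initIdealR, Ideal.span_le]
      rintro _ ⟨f₀, hf₀, rfl⟩
      have hkey := initR_mem_span_of_mem_map hM hdim hB rfl hcc hdn w hwt hf₀
      rwa [image_coe_eq_range (Bfᶜ : Finset (Fin n)) e
        (fun j => initR w (toLaurent (ellP Bf cc j)))] at hkey
  · -- the weight identity
    have htropsum : ∑ t : Fin (n - d),
        tropR w (toLaurent (ellP Bf cc ((e t : ↥(Bfᶜ : Finset (Fin n))) : Fin n)) : Laur k n)
        = ∑ j ∈ (Bfᶜ : Finset (Fin n)), w j := by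
      have h1 : ∀ t : Fin (n - d),
          tropR w (toLaurent (ellP Bf cc ((e t : ↥(Bfᶜ : Finset (Fin n))) : Fin n)) : Laur k n)
          = w ((e t : ↥(Bfᶜ : Finset (Fin n))) : Fin n) := by
        intro t
        exact tropR_toLaurent_ellP w (Finset.mem_compl.mp (e t).2) (hwt _ (e t).2)
      rw [Finset.sum_congr rfl (fun t _ => h1 t)]
      rw [Equiv.sum_comp e (fun x : ↥(Bfᶜ : Finset (Fin n)) => w (x : Fin n))]
      exact Finset.sum_coe_sort _ w
    rw [htropsum]
    have hsplit : ∑ i, w i = ∑ i ∈ Bf, w i + ∑ i ∈ (Bfᶜ : Finset (Fin n)), w i :=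
      (Finset.sum_add_sum_compl Bf w).symm
    have hsup : sSup {x : ℝ | ∃ B : Set (Fin n), M.IsBase B ∧ x = ∑ᶠ i ∈ B, w i}
        = ∑ i ∈ Bf, w i := by
      have hwitness : (∑ i ∈ Bf, w i) ∈
          {x : ℝ | ∃ B : Set (Fin n), M.IsBase B ∧ x = ∑ᶠ i ∈ B, w i} :=
        ⟨↑Bf, hB, (finsum_mem_coe_finset w Bf).symm⟩
      have hub : ∀ x ∈ {x : ℝ | ∃ B : Set (Fin n), M.IsBase B ∧ x = ∑ᶠ i ∈ B, w i},
          x ≤ ∑ i ∈ Bf, w i := by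
        rintro x ⟨B', hB', rfl⟩
        have hfin : B'.Finite := Set.toFinite B'
        have hcoe : ↑hfin.toFinset = B' := Set.Finite.coe_toFinset hfin
        have := hmax hfin.toFinset (by rwa [hcoe])
        rw [← hcoe, finsum_mem_coe_finset]
        exact this
      exact le_antisymm (csSup_le ⟨_, hwitness⟩ hub) (le_csSup ⟨_, hub⟩ hwitness)
    rw [hsup, hsplit]
    ring
end
end
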